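/- Let α and β be real numbers with |α| < 1 and |β| < 1, and let k and l be integers with 0 ≤ k < l. Then Σ_{n=0}^{∞} α^n · β^{⌊((l−1)n + k)/l⌋} = (1/(1 − αβ)) · (1 + α^{k+1}·β^k·(1 − β)/(1 − α^l·β^{l−1})). -/

import Mathlib

open MeasureTheory Filter

/-- The Bernoulli(p) measure on `Bool`: `true` has probability `p`. -/
noncomputable def bern (p : ℝ) : Measure Bool :=
  ENNReal.ofReal p • Measure.dirac true + ENNReal.ofReal (1 - p) • Measure.dirac false

/-- The law of a random subset of `{0, …, N}` where each element is included
independently with probability `p`, encoded by indicator functions. -/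
noncomputable def prodBern (p : ℝ) (N : ℕ) : Measure (Fin (N + 1) → Bool) :=
  Measure.pi fun _ => bern p

/-- `n` belongs to the sumset `A + A`, where `A ⊆ {0,…,N}` is encoded by `ω`. -/
def inSumset {N : ℕ} (ω : Fin (N + 1) → Bool) (n : ℕ) : Prop :=
  ∃ a b : Fin (N + 1), ω a = true ∧ ω b = true ∧ (a : ℕ) + (b : ℕ) = n

/-- `Y`: the number of integers in `{0,…,N}` missing from `A + A`. -/
noncomputable def Ycount (N : ℕ) (ω : Fin (N + 1) → Bool) : ℕ :=
  {n : ℕ | n ≤ N ∧ ¬ inSumset ω n}.ncard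

/-- `Z`: the number of integers in `{N+1,…,2N}` missing from `A + A`. -/
noncomputable def Zcount (N : ℕ) (ω : Fin (N + 1) → Bool) : ℕ :=
  {n : ℕ | N + 1 ≤ n ∧ n ≤ 2 * N ∧ ¬ inSumset ω n}.ncard

/-- `W`: the number of integers in `{0,…,2N}` missing from `A + A`. -/
noncomputable def Wcount (N : ℕ) (ω : Fin (N + 1) → Bool) : ℕ :=
  {n : ℕ | n ≤ 2 * N ∧ ¬ inSumset ω n}.ncard

/-- `Ỹ`: the number of integers in `{0,…,⌊N/2⌋}` missing from `A + A`. -/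
noncomputable def Ytilde (N : ℕ) (ω : Fin (N + 1) → Bool) : ℕ :=
  {n : ℕ | n ≤ N / 2 ∧ ¬ inSumset ω n}.ncard

/-- `Z̃`: the number of integers in `{⌊3N/2⌋+1,…,2N}` missing from `A + A`. -/
noncomputable def Ztilde (N : ℕ) (ω : Fin (N + 1) → Bool) : ℕ :=
  {n : ℕ | 3 * N / 2 + 1 ≤ n ∧ n ≤ 2 * N ∧ ¬ inSumset ω n}.ncard

/-- A string of `k` bits has no two consecutive ones. -/
def noTwoOnes {k : ℕ} (x : Fin k → Bool) : Prop :=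
  ∀ i : ℕ, ∀ hi : i + 1 < k, ¬(x ⟨i, Nat.lt_of_succ_lt hi⟩ = true ∧ x ⟨i + 1, hi⟩ = true)

/-- `a_k`: the probability that `k` i.i.d. Bernoulli(p) bits contain no two
consecutive 1's (with `a_0 = 1`). -/
noncomputable def aseq (p : ℝ) (k : ℕ) : ℝ :=
  ((Measure.pi fun _ : Fin k => bern p) {x | noTwoOnes x}).toReal

set_option maxHeartbeats 1600000 in
/-- Floor-geometric sum: for `|α|, |β| < 1` and integers `0 ≤ k < l`,
`Σ_{n≥0} α^n β^⌊((l-1)n+k)/l⌋ = (1/(1-αβ))(1 + α^{k+1}β^k(1-β)/(1-α^l β^{l-1}))`. -/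
theorem stmt17 (a b : ℝ) (ha : |a| < 1) (hb : |b| < 1) (k l : ℕ) (hkl : k < l) :
    ∑' n : ℕ, a ^ n * b ^ (((l - 1) * n + k) / l) =
      1 / (1 - a * b) *
        (1 + a ^ (k + 1) * b ^ k * (1 - b) / (1 - a ^ l * b ^ (l - 1))) := by
  obtain ⟨j, rfl⟩ : ∃ j, l = k + j + 1 := ⟨l - k - 1, by omega⟩
  set m := k + j with hm
  have hl1 : m + 1 - 1 = m := by omega
  rw [show k + j + 1 = m + 1 from rfl, hl1]
  set x := a ^ (m + 1) * b ^ m with hxdef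
  have ha1 : (0:ℝ) ≤ |a| := abs_nonneg a
  have hb1 : (0:ℝ) ≤ |b| := abs_nonneg b
  have hx : |x| < 1 := by
    rw [hxdef, abs_mul, abs_pow, abs_pow]
    calc |a| ^ (m+1) * |b| ^ m ≤ |a| * 1 :=
          mul_le_mul (pow_le_of_le_one ha1 ha.le (by omega)) (pow_le_one₀ hb1 hb.le)
            (by positivity) ha1
      _ < 1 := by simpa using ha
  have hab : |a * b| < 1 := by
    rw [abs_mul]
    calc |a| * |b| ≤ |a| * 1 := by nlinarith
      _ < 1 := by simpa using ha
  have habne : a * b ≠ 1 := by intro h; rw [h] at hab; simp at hab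
  have hab0 : (1:ℝ) - a * b ≠ 0 := by
    intro h; apply habne; linarith
  have hx0 : (1:ℝ) - x ≠ 0 := by
    intro h
    have : x = 1 := by linarith
    rw [this] at hx; simp at hx
  -- the summand
  set f : ℕ → ℝ := fun n => a ^ n * b ^ ((m * n + k) / (m + 1)) with hf
  -- exponent computation
  have hexp : ∀ q r : ℕ, r < m + 1 → (m * (q * (m+1) + r) + k) / (m+1)
      = q * m + (m * r + k) / (m+1) := by
    intro q r hr
    have h1 : m * (q * (m+1) + r) + k = (m * r + k) + (q * m) * (m+1) := by ring
    rw [h1, Nat.add_mul_div_right _ _ (Nat.succ_pos m), Nat.add_comm]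
  have hexp1 : ∀ r : ℕ, r ≤ k → (m * r + k) / (m+1) = r := by
    intro r hr
    apply Nat.div_eq_of_lt_le
    · nlinarith
    · have h2 : Nat.succ r * (m+1) = r * (m+1) + (m+1) := Nat.succ_mul r (m+1)
      have h3 : k ≤ m := Nat.le_add_right k j
      nlinarith
  have hexp2 : ∀ s : ℕ, k ≤ s → s ≤ m → (m * (s+1) + k) / (m+1) = s := by
    intro s hks hsm
    apply Nat.div_eq_of_lt_le
    · nlinarith
    · have h2 : Nat.succ s * (m+1) = s * (m+1) + (m+1) := Nat.succ_mul s (m+1)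
      nlinarith
  -- summability
  have hsumf : Summable f := by
    apply Summable.of_abs
    apply Summable.of_nonneg_of_le (fun n => abs_nonneg _) _
      (summable_geometric_of_lt_one ha1 ha)
    intro n
    rw [hf]
    simp only [abs_mul, abs_pow]
    calc |a| ^ n * |b| ^ ((m * n + k) / (m+1)) ≤ |a| ^ n * 1 := by
          have := pow_le_one₀ hb1 hb.le (n := (m * n + k) / (m+1))
          nlinarith [pow_nonneg ha1 n]
      _ = |a| ^ n := mul_one _
  -- reindex by div/mod
  have e := (Nat.divModEquiv (m+1)).symm
  have hre : ∑' n : ℕ, f n = ∑' p : ℕ × Fin (m+1), f ((Nat.divModEquiv (m+1)).symm p) :=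
    ((Nat.divModEquiv (m+1)).symm.tsum_eq f).symm
  have hFval : ∀ p : ℕ × Fin (m+1), f ((Nat.divModEquiv (m+1)).symm p)
      = x ^ p.1 * (a ^ (p.2 : ℕ) * b ^ ((m * (p.2 : ℕ) + k) / (m+1))) := by
    rintro ⟨q, r⟩
    simp only [Nat.divModEquiv_symm_apply, hf]
    rw [hexp q r r.isLt, pow_add, pow_add, pow_mul, pow_mul, hxdef, mul_pow]
    ring
  have hsumF : Summable fun p : ℕ × Fin (m+1) => f ((Nat.divModEquiv (m+1)).symm p) :=
    (Equiv.summable_iff _).mpr hsumf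
  rw [show (∑' n : ℕ, a ^ n * b ^ ((m * n + k) / (m + 1))) = ∑' n, f n from rfl, hre,
    Summable.tsum_prod hsumF]
  simp only [hFval]
  have hinner : ∀ q : ℕ, (∑' r : Fin (m+1), x ^ q *
      (a ^ (r : ℕ) * b ^ ((m * (r : ℕ) + k) / (m+1))))
      = x ^ q * ∑ r ∈ Finset.range (m+1), a ^ r * b ^ ((m * r + k) / (m+1)) := by
    intro q
    rw [tsum_fintype, ← Finset.mul_sum,
      Fin.sum_univ_eq_sum_range (fun r => a ^ r * b ^ ((m * r + k) / (m + 1)))]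
  simp only [hinner]
  rw [tsum_mul_right, tsum_geometric_of_abs_lt_one hx]
  -- compute the finite sum
  have h1 : ∑ r ∈ Finset.Ico 0 (k+1), a ^ r * b ^ ((m * r + k) / (m+1))
      = ∑ r ∈ Finset.range (k+1), (a*b) ^ r := by
    rw [← Finset.range_eq_Ico]
    refine Finset.sum_congr rfl fun r hr => ?_
    rw [Finset.mem_range] at hr
    rw [hexp1 r (by omega), ← mul_pow]
  have h2 : ∑ r ∈ Finset.Ico (k+1) (m+1), a ^ r * b ^ ((m * r + k) / (m+1))
      = a ^ (k+1) * b ^ k * ∑ i ∈ Finset.range j, (a*b) ^ i := by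
    rw [Finset.sum_Ico_eq_sum_range]
    have hj : m + 1 - (k + 1) = j := by omega
    rw [hj, Finset.mul_sum]
    refine Finset.sum_congr rfl fun i hi => ?_
    rw [Finset.mem_range] at hi
    rw [show k + 1 + i = (k + i) + 1 by omega, hexp2 (k+i) (by omega) (by omega),
      pow_add, pow_add, mul_pow]
    ring
  have hsplit : ∑ r ∈ Finset.range (m+1), a ^ r * b ^ ((m * r + k) / (m+1))
      = (∑ r ∈ Finset.range (k+1), (a*b) ^ r)
        + a ^ (k+1) * b ^ k * ∑ i ∈ Finset.range j, (a*b) ^ i := by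
    rw [Finset.range_eq_Ico,
      ← Finset.sum_Ico_consecutive _ (Nat.zero_le (k+1)) (by omega : k+1 ≤ m+1), h1, h2]
  rw [hsplit, geom_sum_eq habne, geom_sum_eq habne]
  set B := a ^ (k+1) * b ^ k with hB
  have hA : (a*b) ^ (k+1) = B * b := by
    rw [hB, mul_pow, pow_succ]; ring
  have hBC : B * (a*b) ^ j = x := by
    rw [hB, hxdef, hm, mul_pow, pow_add, pow_add, pow_add]; ring
  have habne' : a * b - 1 ≠ 0 := sub_ne_zero.mpr habne
  have h2 : B * (((a*b)^j - 1)/(a*b-1)) = (x - B)/(a*b-1) := by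
    rw [mul_div_assoc'] ; congr 1
    rw [mul_sub, hBC, mul_one]
  rw [hA, h2]
  have e1 : a * b - 1 = -(1 - a*b) := by ring
  rw [e1]
  field_simp
  ring
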